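/- Let U_n(t) denote the Chebyshev polynomials of the second kind. Then the formal power series identity (1−x)((1+x)^2 − 4t^2 x) · ∑_{n≥0} U_n(t)^2 x^n = 1 + x holds in (ℚ[t])[[x]]. -/

import Mathlib

open PowerSeries Polynomial

private lemma U_key (n : ℤ) :
    (Polynomial.Chebyshev.U ℚ (n + 3)) ^ 2
      = (4 * Polynomial.X ^ 2 - 1) *
          ((Polynomial.Chebyshev.U ℚ (n + 2)) ^ 2 - (Polynomial.Chebyshev.U ℚ (n + 1)) ^ 2)
        + (Polynomial.Chebyshev.U ℚ n) ^ 2 := by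
  rw [show n + 3 = (n + 1) + 2 by ring, Polynomial.Chebyshev.U_add_two,
    show n + 1 + 1 = n + 2 by ring, Polynomial.Chebyshev.U_add_two]
  ring

theorem chebyshevU_sq_genfun :
    ((1 - PowerSeries.X) *
        ((1 + PowerSeries.X) ^ 2 - 4 * PowerSeries.C (R := ℚ[X]) (Polynomial.X ^ 2) * PowerSeries.X)) *
        PowerSeries.mk (fun n : ℕ => (Polynomial.Chebyshev.U ℚ n) ^ 2)
      = 1 + PowerSeries.X := by
  set A : (ℚ[X])⟦X⟧ := PowerSeries.mk (fun n : ℕ => (Polynomial.Chebyshev.U ℚ n) ^ 2) with hA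
  have hrw : ((1 - PowerSeries.X) *
        ((1 + PowerSeries.X) ^ 2 - 4 * PowerSeries.C (R := ℚ[X]) (Polynomial.X ^ 2) * PowerSeries.X)) * A
      = A + PowerSeries.C (R := ℚ[X]) (1 - 4 * Polynomial.X ^ 2) * (A * PowerSeries.X ^ 1)
          + PowerSeries.C (R := ℚ[X]) (4 * Polynomial.X ^ 2 - 1) * (A * PowerSeries.X ^ 2)
          - A * PowerSeries.X ^ 3 := by
    simp only [map_sub, map_mul, map_one, map_ofNat, map_pow]
    ring
  rw [hrw]
  refine PowerSeries.ext fun n => ?_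
  rw [map_sub, map_add, map_add, PowerSeries.coeff_C_mul, PowerSeries.coeff_C_mul,
    PowerSeries.coeff_mul_X_pow', PowerSeries.coeff_mul_X_pow', PowerSeries.coeff_mul_X_pow',
    map_add, PowerSeries.coeff_one, PowerSeries.coeff_X]
  simp only [hA, coeff_mk, mul_ite, mul_zero]
  match n with
  | 0 => simp
  | 1 => simp [Polynomial.Chebyshev.U_zero, Polynomial.Chebyshev.U_one]; ring
  | 2 =>
    simp only [show (1:ℕ) ≤ 2 by norm_num, show (2:ℕ) ≤ 2 by norm_num,
      show ¬ (3:ℕ) ≤ 2 by norm_num, if_true, if_false]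
    norm_num
    rw [show (2:ℤ) = 0 + 2 by norm_num, Polynomial.Chebyshev.U_add_two]
    simp [Polynomial.Chebyshev.U_zero, Polynomial.Chebyshev.U_one]
    ring
  | (n+3) =>
    simp only [show (1:ℕ) ≤ n+3 by omega, show (2:ℕ) ≤ n+3 by omega,
      show (3:ℕ) ≤ n+3 by omega, if_true]
    have e3 : ((n+3 : ℕ) : ℤ) = (n : ℤ) + 3 := by push_cast; ring
    have e2 : ((n+3-1 : ℕ) : ℤ) = (n : ℤ) + 2 := by omega
    have e1 : ((n+3-2 : ℕ) : ℤ) = (n : ℤ) + 1 := by omega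
    have e0 : ((n+3-3 : ℕ) : ℤ) = (n : ℤ) := by omega
    rw [e3, e2, e1, e0]
    have := U_key (n : ℤ)
    simp only [show n+3 ≠ 0 by omega, show n+3 ≠ 1 by omega, if_false]
    linear_combination this
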